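/- Let K be a complex Hilbert space, let δ > 0, and let T be a bounded operator on K with ‖T‖ ≤ 1 such that ‖S·T − T·S‖ ≤ δ for every bounded operator S on K with ‖S‖ ≤ 1. Then there exists λ ∈ ℂ such that ‖T − λ·1_K‖ ≤ 3δ. -/

import Mathlib

/-- A contraction `T` on a Hilbert space which almost commutes (up to δ) with
every contraction is within 3δ of a scalar multiple of the identity. -/
theorem almost_scalar_of_almost_central
    {K : Type*} [NormedAddCommGroup K] [InnerProductSpace ℂ K] [CompleteSpace K]
    (δ : ℝ) (hδ : 0 < δ)
    (T : K →L[ℂ] K) (hT : ‖T‖ ≤ 1)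
    (hcomm : ∀ S : K →L[ℂ] K, ‖S‖ ≤ 1 → ‖S * T - T * S‖ ≤ δ) :
    ∃ l : ℂ, ‖T - l • (1 : K →L[ℂ] K)‖ ≤ 3 * δ := by
  by_cases hK : Nontrivial K
  · obtain ⟨u, hu⟩ := exists_norm_eq K (zero_le_one (α := ℝ))
    set l : ℂ := inner ℂ u (T u) with hl
    refine ⟨l, ?_⟩
    have key : ∀ x : K, ‖x‖ = 1 → ‖T x - l • x‖ ≤ δ := by
      intro x hx
      set S : K →L[ℂ] K := (innerSL ℂ u).smulRight x with hS
      have hSnorm : ‖S‖ ≤ 1 := by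
        rw [hS, ContinuousLinearMap.norm_smulRight_apply, innerSL_apply_norm, hu, hx]
        norm_num
      have h1 := hcomm S hSnorm
      have h2 : (S * T - T * S) u = l • x - T x := by
        have huu : (inner ℂ u u : ℂ) = 1 := by
          rw [inner_self_eq_norm_sq_to_K, hu]; norm_num
        simp [hS, ContinuousLinearMap.mul_apply, ContinuousLinearMap.sub_apply,
          ContinuousLinearMap.smulRight_apply, innerSL_apply_apply, huu, hl, hu]
      have h3 : ‖(S * T - T * S) u‖ ≤ δ := by
        calc ‖(S * T - T * S) u‖ ≤ ‖S * T - T * S‖ * ‖u‖ :=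
              (S * T - T * S).le_opNorm u
          _ ≤ δ := by rw [hu]; simpa using h1
      rw [h2] at h3
      calc ‖T x - l • x‖ = ‖l • x - T x‖ := by rw [norm_sub_rev]
        _ ≤ δ := h3
    have hbound : ‖T - l • (1 : K →L[ℂ] K)‖ ≤ δ := by
      refine ContinuousLinearMap.opNorm_le_bound _ hδ.le (fun y => ?_)
      rcases eq_or_ne y 0 with rfl | hy
      · simp
      · have hny : ‖y‖ ≠ 0 := norm_ne_zero_iff.mpr hy
        have hx1 : ‖(‖y‖⁻¹ : ℂ) • y‖ = 1 := by
          simp [norm_smul, inv_mul_cancel₀ hny]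
        have := key ((‖y‖⁻¹ : ℂ) • y) hx1
        have heq : T ((‖y‖⁻¹ : ℂ) • y) - l • ((‖y‖⁻¹ : ℂ) • y)
            = (‖y‖⁻¹ : ℂ) • (T y - l • y) := by
          rw [map_smul, smul_comm l, smul_sub]
        rw [heq] at this
        have hns : ‖(‖y‖⁻¹ : ℂ) • (T y - l • y)‖ = ‖y‖⁻¹ * ‖T y - l • y‖ := by
          simp [norm_smul]
        rw [hns] at this
        have : ‖T y - l • y‖ ≤ δ * ‖y‖ := by
          rw [inv_mul_le_iff₀ (by positivity)] at this
          linarith [this]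
        simpa [ContinuousLinearMap.sub_apply, ContinuousLinearMap.smul_apply] using this
    linarith
  · refine ⟨0, ?_⟩
    have : ¬ Nontrivial K → Subsingleton K := not_nontrivial_iff_subsingleton.mp
    have hsub : Subsingleton K := this hK
    have hz : T - (0 : ℂ) • (1 : K →L[ℂ] K) = 0 := by
      ext x
      simp [Subsingleton.elim x 0]
    rw [hz]
    simp
    positivity
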